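/- arXiv:2211.01962 — 7 statements merged into one kernel-verified Lean document; each statement's English description precedes it below -/
import Mathlib

section
/- For any sequence of positive reals $x_1,\dots,x_n$, we have $\left(\sum_{i=1}^n x_i\right) / \sqrt{\sum_{i=1}^n i\, x_i^2} \le \sqrt{1+\log n}$. -/
theorem stmt_0 (n : ℕ) (hn : 1 ≤ n) (x : ℕ → ℝ)
    (hx : ∀ i ∈ Finset.Icc 1 n, 0 < x i) :
    (∑ i ∈ Finset.Icc 1 n, x i) /
        Real.sqrt (∑ i ∈ Finset.Icc 1 n, (i : ℝ) * (x i) ^ 2)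
      ≤ Real.sqrt (1 + Real.log n) := by
  set S := ∑ i ∈ Finset.Icc 1 n, (i : ℝ) * (x i) ^ 2 with hS
  have hSpos : 0 < S := by
    apply Finset.sum_pos
    · intro i hi
      have hi1 : 1 ≤ i := (Finset.mem_Icc.mp hi).1
      have hxi := hx i hi
      have hi0 : (0:ℝ) < i := by exact_mod_cast hi1
      positivity
    · exact ⟨1, Finset.mem_Icc.mpr ⟨le_refl 1, hn⟩⟩
  have hL : (0:ℝ) ≤ 1 + Real.log n := by
    have : (0:ℝ) ≤ Real.log n := Real.log_nonneg (by exact_mod_cast hn)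
    linarith
  rw [div_le_iff₀ (Real.sqrt_pos.mpr hSpos), ← Real.sqrt_mul hL]
  have hx0 : 0 ≤ ∑ i ∈ Finset.Icc 1 n, x i :=
    Finset.sum_nonneg fun i hi => (hx i hi).le
  rw [Real.le_sqrt hx0]
  -- Cauchy-Schwarz
  have key : (∑ i ∈ Finset.Icc 1 n, x i) ^ 2 ≤
      (∑ i ∈ Finset.Icc 1 n, ((i:ℝ)⁻¹)) * S := by
    have h := Finset.sum_mul_sq_le_sq_mul_sq (Finset.Icc 1 n)
      (fun i => Real.sqrt ((i:ℝ)⁻¹)) (fun i => Real.sqrt (i:ℝ) * x i)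
    have e1 : ∀ i ∈ Finset.Icc 1 n,
        Real.sqrt ((i:ℝ)⁻¹) * (Real.sqrt (i:ℝ) * x i) = x i := by
      intro i hi
      have hi1 : (1:ℝ) ≤ (i:ℝ) := by exact_mod_cast (Finset.mem_Icc.mp hi).1
      rw [← mul_assoc, ← Real.sqrt_mul (by positivity), inv_mul_cancel₀ (by linarith),
        Real.sqrt_one, one_mul]
    rw [Finset.sum_congr rfl e1] at h
    calc (∑ i ∈ Finset.Icc 1 n, x i) ^ 2
        ≤ (∑ i ∈ Finset.Icc 1 n, Real.sqrt ((i:ℝ)⁻¹) ^ 2) *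
          (∑ i ∈ Finset.Icc 1 n, (Real.sqrt (i:ℝ) * x i) ^ 2) := h
      _ = (∑ i ∈ Finset.Icc 1 n, ((i:ℝ)⁻¹)) * S := by
          congr 1
          · exact Finset.sum_congr rfl fun i _ => Real.sq_sqrt (by positivity)
          · exact Finset.sum_congr rfl fun i _ => by
              rw [mul_pow, Real.sq_sqrt (by positivity)]
  have harm : (∑ i ∈ Finset.Icc 1 n, ((i:ℝ)⁻¹)) ≤ 1 + Real.log n := by
    have := harmonic_le_one_add_log n
    rw [harmonic_eq_sum_Icc, Rat.cast_sum] at this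
    push_cast at this
    exact this
  calc (∑ i ∈ Finset.Icc 1 n, x i) ^ 2
      ≤ (∑ i ∈ Finset.Icc 1 n, ((i:ℝ)⁻¹)) * S := key
    _ ≤ (1 + Real.log n) * S := by
        exact mul_le_mul_of_nonneg_right harm hSpos.le
  positivity
end

section
/- For a joint distribution on a pair $(X,Y)$: $\mathbb{E}_{X \sim P_X}[D_H^2(P_{Y|X}, Q_{Y|X})] \le 4 D_H^2(P_{X,Y}, Q_{X,Y})$, where $D_H^2$ denotes squared Hellinger divergence and $P_{Y|X}$, $Q_{Y|X}$ are the conditional distributions of $Y$ given $X$ under $P$ and $Q$. -/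
open MeasureTheory

lemma sqrt_mul_integrable {α : Type*} [MeasurableSpace α] {m : Measure α} {a b : α → ℝ}
    (ha0 : ∀ y, 0 ≤ a y) (hb0 : ∀ y, 0 ≤ b y)
    (hai : Integrable a m) (hbi : Integrable b m) :
    Integrable (fun y => Real.sqrt (a y) * Real.sqrt (b y)) m := by
  refine Integrable.mono ((hai.add hbi).div_const 2)
    ((Real.continuous_sqrt.comp_aestronglyMeasurable hai.1).mul
      (Real.continuous_sqrt.comp_aestronglyMeasurable hbi.1))
    (Filter.Eventually.of_forall fun y => ?_)
  simp only [Pi.add_apply, Real.norm_eq_abs]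
  rw [abs_of_nonneg (mul_nonneg (Real.sqrt_nonneg _) (Real.sqrt_nonneg _)),
    abs_of_nonneg (div_nonneg (add_nonneg (ha0 y) (hb0 y)) (by norm_num))]
  nlinarith [sq_nonneg (Real.sqrt (a y) - Real.sqrt (b y)), Real.sq_sqrt (ha0 y),
    Real.sq_sqrt (hb0 y)]

lemma real_key (sA sB S : ℝ) (hsA : 0 < sA) (hsB : 0 < sB) (hS0 : 0 ≤ S)
    (hS : S ≤ sA * sB) :
    sA ^ 2 * ((1 / 2) * (sA ^ 2 * (1 / sA ^ 2) + sB ^ 2 * (1 / sB ^ 2)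
        - S * (2 / (sA * sB))))
      ≤ 2 * (sA ^ 2 + sB ^ 2 - 2 * S) := by
  have h : sA ^ 2 * ((1 / 2) * (sA ^ 2 * (1 / sA ^ 2) + sB ^ 2 * (1 / sB ^ 2)
      - S * (2 / (sA * sB)))) = sA ^ 2 - sA * S / sB := by
    field_simp
    ring
  rw [h]

  rw [← mul_le_mul_iff_of_pos_right hsB]
  have h2 : (sA ^ 2 - sA * S / sB) * sB = sA ^ 2 * sB - sA * S := by
    field_simp
  rw [h2]
  rcases le_or_gt sA (4 * sB) with hc | hc
  · nlinarith [mul_nonneg (sub_nonneg.2 hS) (sub_nonneg.2 hc), sq_nonneg (sA - sB),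
      mul_nonneg hsB.le (sq_nonneg (sA - sB))]
  · nlinarith [mul_nonneg hS0 (le_of_lt (by linarith : (0:ℝ) < sA - 4 * sB)),
      mul_pos hsA hsB, sq_nonneg sA, mul_nonneg (sq_nonneg sA) hsB.le,
      mul_nonneg (mul_nonneg hsB.le hsB.le) hsB.le]

lemma aux_key {Y : Type*} [MeasurableSpace Y] (ν : Measure Y) (a b : Y → ℝ)
    (ha0 : ∀ y, 0 ≤ a y) (hb0 : ∀ y, 0 ≤ b y)
    (hai : Integrable a ν) (hbi : Integrable b ν) :
    (∫ y, a y ∂ν) * ((1 / 2) * ∫ y, (Real.sqrt (a y / ∫ y', a y' ∂ν)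
        - Real.sqrt (b y / ∫ y', b y' ∂ν)) ^ 2 ∂ν)
      ≤ 2 * ((∫ y, a y ∂ν) + (∫ y, b y ∂ν)
          - 2 * ∫ y, Real.sqrt (a y) * Real.sqrt (b y) ∂ν) := by
  set A := ∫ y, a y ∂ν with hAdef
  set B := ∫ y, b y ∂ν with hBdef
  set S := ∫ y, Real.sqrt (a y) * Real.sqrt (b y) ∂ν with hSdef
  have hA0 : 0 ≤ A := integral_nonneg ha0
  have hB0 : 0 ≤ B := integral_nonneg hb0
  have hS0 : 0 ≤ S := integral_nonneg fun y =>
    mul_nonneg (Real.sqrt_nonneg _) (Real.sqrt_nonneg _)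
  have hsqi : Integrable (fun y => Real.sqrt (a y) * Real.sqrt (b y)) ν :=
    sqrt_mul_integrable ha0 hb0 hai hbi
  rcases eq_or_lt_of_le hA0 with hA | hA
  · -- A = 0
    have ha_ae : a =ᵐ[ν] 0 := (integral_eq_zero_iff_of_nonneg ha0 hai).mp hA.symm
    have hSz : S = 0 := by
      rw [hSdef]
      rw [integral_eq_zero_iff_of_nonneg_ae ?_ hsqi]
      · filter_upwards [ha_ae] with y hy
        simp [hy]
      · exact Filter.Eventually.of_forall fun y =>
          mul_nonneg (Real.sqrt_nonneg _) (Real.sqrt_nonneg _)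
    rw [← hA, hSz]
    simp
    linarith
  rcases eq_or_lt_of_le hB0 with hB | hB
  · -- B = 0, A > 0
    have hb_ae : b =ᵐ[ν] 0 := (integral_eq_zero_iff_of_nonneg hb0 hbi).mp hB.symm
    have hSz : S = 0 := by
      rw [hSdef]
      rw [integral_eq_zero_iff_of_nonneg_ae ?_ hsqi]
      · filter_upwards [hb_ae] with y hy
        simp [hy]
      · exact Filter.Eventually.of_forall fun y =>
          mul_nonneg (Real.sqrt_nonneg _) (Real.sqrt_nonneg _)
    have hI : ∫ y, (Real.sqrt (a y / A) - Real.sqrt (b y / B)) ^ 2 ∂ν = 1 := by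
      have : ∀ y, (Real.sqrt (a y / A) - Real.sqrt (b y / B)) ^ 2 = a y * (1 / A) := by
        intro y
        rw [← hB, div_zero, Real.sqrt_zero, sub_zero, Real.sq_sqrt (div_nonneg (ha0 y) hA0)]
        ring
      rw [integral_congr_ae (Filter.Eventually.of_forall this), integral_mul_const,
        ← hAdef, mul_one_div, div_self hA.ne']
    rw [hI, hSz, ← hB]
    nlinarith [hA]
  · -- A > 0, B > 0
    set sA := Real.sqrt A with hsAdef
    set sB := Real.sqrt B with hsBdef
    have hsA : 0 < sA := Real.sqrt_pos.mpr hA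
    have hsB : 0 < sB := Real.sqrt_pos.mpr hB
    have hsA2 : sA ^ 2 = A := Real.sq_sqrt hA0
    have hsB2 : sB ^ 2 = B := Real.sq_sqrt hB0
    -- Cauchy-Schwarz type bound: S ≤ sA * sB
    have hS : S ≤ sA * sB := by
      have hpt : ∀ y, (2 * sA * sB) * (Real.sqrt (a y) * Real.sqrt (b y))
          ≤ sB ^ 2 * a y + sA ^ 2 * b y := by
        intro y
        nlinarith [sq_nonneg (sB * Real.sqrt (a y) - sA * Real.sqrt (b y)),
          Real.sq_sqrt (ha0 y), Real.sq_sqrt (hb0 y)]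
      have hia : Integrable (fun y => sB ^ 2 * a y) ν := hai.const_mul _
      have hib : Integrable (fun y => sA ^ 2 * b y) ν := hbi.const_mul _
      have hiab : Integrable (fun y => sB ^ 2 * a y + sA ^ 2 * b y) ν := hia.add hib
      have hint : (2 * sA * sB) * S ≤ sB ^ 2 * A + sA ^ 2 * B := by
        have := integral_mono (hsqi.const_mul (2 * sA * sB)) hiab hpt
        rwa [integral_add hia hib,
          integral_const_mul, integral_const_mul, integral_const_mul, ← hAdef, ← hBdef,
          ← hSdef] at this
      nlinarith [mul_pos hsA hsB]
    -- expand the inner integral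
    have hI : ∫ y, (Real.sqrt (a y / A) - Real.sqrt (b y / B)) ^ 2 ∂ν
        = A * (1 / A) + B * (1 / B) - S * (2 / (sA * sB)) := by
      have hpt : ∀ y, (Real.sqrt (a y / A) - Real.sqrt (b y / B)) ^ 2
          = (a y * (1 / A) + b y * (1 / B))
            - (Real.sqrt (a y) * Real.sqrt (b y)) * (2 / (sA * sB)) := by
        intro y
        rw [Real.sqrt_div (ha0 y), Real.sqrt_div (hb0 y)]
        have h1 : Real.sqrt (a y) ^ 2 = a y := Real.sq_sqrt (ha0 y)
        have h2 : Real.sqrt (b y) ^ 2 = b y := Real.sq_sqrt (hb0 y)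
        have e : (Real.sqrt (a y) / sA - Real.sqrt (b y) / sB) ^ 2
            = Real.sqrt (a y) ^ 2 * (1 / sA ^ 2) + Real.sqrt (b y) ^ 2 * (1 / sB ^ 2)
              - (Real.sqrt (a y) * Real.sqrt (b y)) * (2 / (sA * sB)) := by
          field_simp
          ring
        rw [e, h1, h2, hsA2, hsB2]
      have hia : Integrable (fun y => a y * (1 / A)) ν := hai.mul_const _
      have hib : Integrable (fun y => b y * (1 / B)) ν := hbi.mul_const _
      have hiab : Integrable (fun y => a y * (1 / A) + b y * (1 / B)) ν := hia.add hib
      rw [integral_congr_ae (Filter.Eventually.of_forall hpt),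
        integral_sub hiab (hsqi.mul_const (2 / (sA * sB))),
        integral_add hia hib,
        integral_mul_const, integral_mul_const, integral_mul_const, ← hAdef, ← hBdef,
        ← hSdef]
    rw [hI]
    have := real_key sA sB S hsA hsB hS0 hS
    rw [hsA2, hsB2] at this
    convert this using 2

theorem stmt_2 {X Y : Type*} [MeasurableSpace X] [MeasurableSpace Y]
    (μ : Measure X) (ν : Measure Y) [SigmaFinite μ] [SigmaFinite ν]
    (p q : X × Y → ℝ) (hp0 : ∀ z, 0 ≤ p z) (hq0 : ∀ z, 0 ≤ q z)
    (hpi : Integrable p (μ.prod ν)) (hqi : Integrable q (μ.prod ν))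
    (hp1 : ∫ z, p z ∂(μ.prod ν) = 1) (hq1 : ∫ z, q z ∂(μ.prod ν) = 1) :
    ∫ x, (∫ y, p (x, y) ∂ν) *
        ((1 / 2) * ∫ y, (Real.sqrt (p (x, y) / ∫ y', p (x, y') ∂ν)
            - Real.sqrt (q (x, y) / ∫ y', q (x, y') ∂ν)) ^ 2 ∂ν) ∂μ
      ≤ 4 * ((1 / 2) * ∫ z, (Real.sqrt (p z) - Real.sqrt (q z)) ^ 2 ∂(μ.prod ν)) := by
  have hsq : Integrable (fun z => Real.sqrt (p z) * Real.sqrt (q z)) (μ.prod ν) :=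
    sqrt_mul_integrable hp0 hq0 hpi hqi
  set T := ∫ z, Real.sqrt (p z) * Real.sqrt (q z) ∂(μ.prod ν) with hTdef
  -- compute the RHS integral
  have hR : ∫ z, (Real.sqrt (p z) - Real.sqrt (q z)) ^ 2 ∂(μ.prod ν) = 2 - 2 * T := by
    have hpt : ∀ z, (Real.sqrt (p z) - Real.sqrt (q z)) ^ 2
        = (p z + q z) - 2 * (Real.sqrt (p z) * Real.sqrt (q z)) := by
      intro z
      have h1 : Real.sqrt (p z) ^ 2 = p z := Real.sq_sqrt (hp0 z)
      have h2 : Real.sqrt (q z) ^ 2 = q z := Real.sq_sqrt (hq0 z)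
      nlinarith [h1, h2]
    have hpq : Integrable (fun z => p z + q z) (μ.prod ν) := hpi.add hqi
    rw [integral_congr_ae (Filter.Eventually.of_forall hpt),
      integral_sub hpq (hsq.const_mul 2), integral_add hpi hqi,
      integral_const_mul, hp1, hq1, ← hTdef]
    ring
  -- the key integral comparison
  have hgint : Integrable (fun x => 2 * ((∫ y, p (x, y) ∂ν) + (∫ y, q (x, y) ∂ν)
      - 2 * ∫ y, Real.sqrt (p (x, y)) * Real.sqrt (q (x, y)) ∂ν)) μ :=
    (((hpi.integral_prod_left.add hqi.integral_prod_left).sub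
      (hsq.integral_prod_left.const_mul 2)).const_mul 2)
  have key : ∫ x, (∫ y, p (x, y) ∂ν) *
        ((1 / 2) * ∫ y, (Real.sqrt (p (x, y) / ∫ y', p (x, y') ∂ν)
            - Real.sqrt (q (x, y) / ∫ y', q (x, y') ∂ν)) ^ 2 ∂ν) ∂μ
      ≤ ∫ x, 2 * ((∫ y, p (x, y) ∂ν) + (∫ y, q (x, y) ∂ν)
          - 2 * ∫ y, Real.sqrt (p (x, y)) * Real.sqrt (q (x, y)) ∂ν) ∂μ := by
    refine integral_mono_of_nonneg (Filter.Eventually.of_forall fun x => ?_) hgint ?_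
    · exact mul_nonneg (integral_nonneg fun y => hp0 _)
        (mul_nonneg (by norm_num) (integral_nonneg fun y => sq_nonneg _))
    · filter_upwards [hpi.prod_right_ae, hqi.prod_right_ae] with x hx1 hx2
      exact aux_key ν _ _ (fun y => hp0 _) (fun y => hq0 _) hx1 hx2
  have hg : ∫ x, 2 * ((∫ y, p (x, y) ∂ν) + (∫ y, q (x, y) ∂ν)
      - 2 * ∫ y, Real.sqrt (p (x, y)) * Real.sqrt (q (x, y)) ∂ν) ∂μ
      = 2 * (2 - 2 * T) := by
    have hiA : Integrable (fun x => ∫ y, p (x, y) ∂ν) μ := hpi.integral_prod_left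
    have hiB : Integrable (fun x => ∫ y, q (x, y) ∂ν) μ := hqi.integral_prod_left
    have hiAB : Integrable (fun x => (∫ y, p (x, y) ∂ν) + ∫ y, q (x, y) ∂ν) μ :=
      hiA.add hiB
    rw [integral_const_mul,
      integral_sub hiAB (hsq.integral_prod_left.const_mul 2),
      integral_add hiA hiB,
      integral_const_mul, ← integral_prod _ hpi, ← integral_prod _ hqi,
      ← integral_prod _ hsq, hp1, hq1, ← hTdef]
    ring
  rw [hR]
  rw [hg] at key
  linarith
end

section
/- (Elliptical potential lemma) Let $x_1,\dots,x_T \in \mathbb{R}^d$, let $\Lambda_0$ be a positive-definite $d\times d$ matrix, and define $\Lambda_t = \Lambda_0 + \sum_{i=1}^{t-1} x_i x_i^\top$. Then $\sum_{i=1}^T \min\{1, \|x_i\|^2_{\Lambda_i^{-1}}\} \le 2 \log\left(\det(\Lambda_{T+1}) / \det(\Lambda_1)\right)$. -/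
open Matrix

lemma aux_min_le_log (u : ℝ) (hu : 0 ≤ u) : min 1 u ≤ 2 * Real.log (1 + u) := by
  rcases le_total 1 u with h | h
  · rw [min_eq_left h]
    have h2 : Real.log 2 ≤ Real.log (1 + u) :=
      Real.log_le_log (by norm_num) (by linarith)
    have h3 : (0.6931471803 : ℝ) < Real.log 2 := Real.log_two_gt_d9
    linarith
  · rw [min_eq_right h]
    have h1 : (0:ℝ) < 1 + u := by linarith
    have h2 : 1 - (1 + u)⁻¹ ≤ Real.log (1 + u) := Real.one_sub_inv_le_log_of_pos h1
    have h3 : u ≤ 2 * (1 - (1 + u)⁻¹) := by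
      have key : (1 + u) * (1 + u)⁻¹ = 1 := mul_inv_cancel₀ h1.ne'
      nlinarith [key, sq_nonneg u, mul_nonneg hu (inv_nonneg.2 h1.le), inv_nonneg.2 h1.le]
    linarith

lemma aux_det_rank_one (d : ℕ) (v : Fin d → ℝ) (A : Matrix (Fin d) (Fin d) ℝ)
    (hA : IsUnit A.det) :
    (A + replicateCol (Fin 1) v * replicateRow (Fin 1) v).det = A.det * (1 + v ⬝ᵥ (A⁻¹ *ᵥ v)) := by
  erw [det_add_replicateCol_mul_replicateRow hA]
  congr 1
  rw [@det_unique ℝ _ (Fin 1) _ (fun a b => decidableEq_of_subsingleton a b) Unique.fintype _]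
  simp [Matrix.mul_apply, Matrix.mulVec, dotProduct, Finset.sum_mul,
    Finset.mul_sum, mul_comm, mul_assoc, mul_left_comm]
  rw [Finset.sum_comm]
  exact Finset.sum_congr rfl fun i _ => Finset.sum_congr rfl fun j _ => by ring

theorem stmt_4 (d T : ℕ) (x : ℕ → Fin d → ℝ) (Λ0 : Matrix (Fin d) (Fin d) ℝ)
    (hΛ0 : Λ0.PosDef) (Λ : ℕ → Matrix (Fin d) (Fin d) ℝ)
    (hΛ : ∀ t, Λ t = Λ0 + ∑ i ∈ Finset.Ico 1 t, Matrix.vecMulVec (x i) (x i)) :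
    ∑ i ∈ Finset.Icc 1 T, min 1 (x i ⬝ᵥ ((Λ i)⁻¹ *ᵥ x i))
      ≤ 2 * Real.log ((Λ (T + 1)).det / (Λ 1).det) := by
  set u : ℕ → ℝ := fun i => x i ⬝ᵥ ((Λ i)⁻¹ *ᵥ x i) with hu
  have hpos : ∀ t, (Λ t).PosDef := by
    intro t
    rw [hΛ t]
    refine hΛ0.add_posSemidef ?_
    refine Finset.sum_induction _ _ (fun a b ha hb => ha.add hb) Matrix.PosSemidef.zero ?_
    intro i _
    have : vecMulVec (x i) (x i) = replicateCol (Fin 1) (x i) * (replicateCol (Fin 1) (x i))ᴴ := by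
      erw [conjTranspose_replicateCol, star_trivial, ← vecMulVec_eq]
    rw [this]
    exact posSemidef_self_mul_conjTranspose _
  have hunn : ∀ i, 0 ≤ u i := by
    intro i
    have := ((hpos i).inv.posSemidef).dotProduct_mulVec_nonneg (x i)
    simpa using this
  have hdet : ∀ i, 1 ≤ i → (Λ (i + 1)).det = (Λ i).det * (1 + u i) := by
    intro i hi
    have hstep : Λ (i + 1) = Λ i + vecMulVec (x i) (x i) := by
      rw [hΛ, hΛ, Finset.sum_Ico_succ_top hi, add_assoc]
    erw [hstep, vecMulVec_eq (Fin 1),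
      aux_det_rank_one d (x i) (Λ i) (hpos i).det_pos.ne'.isUnit]
  have hdetpos : ∀ i, 0 < (Λ i).det := fun i => (hpos i).det_pos
  have hlog : ∀ i, 1 ≤ i →
      Real.log (1 + u i) = Real.log ((Λ (i + 1)).det) - Real.log ((Λ i).det) := by
    intro i hi
    rw [hdet i hi, Real.log_mul (hdetpos i).ne' (by have := hunn i; positivity)]
    ring
  have htel : ∀ n : ℕ, ∑ i ∈ Finset.Icc 1 n, Real.log (1 + u i)
      = Real.log ((Λ (n + 1)).det) - Real.log ((Λ 1).det) := by
    intro n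
    induction n with
    | zero => simp
    | succ n ih =>
      rw [← Finset.Ico_add_one_right_eq_Icc] at *
      rw [Finset.sum_Ico_succ_top (by omega), ih, hlog (n + 1) (by omega)]
      ring
  calc ∑ i ∈ Finset.Icc 1 T, min 1 (u i)
      ≤ ∑ i ∈ Finset.Icc 1 T, 2 * Real.log (1 + u i) :=
        Finset.sum_le_sum fun i _ => aux_min_le_log (u i) (hunn i)
    _ = 2 * ∑ i ∈ Finset.Icc 1 T, Real.log (1 + u i) := by rw [Finset.mul_sum]
    _ = 2 * (Real.log ((Λ (T + 1)).det) - Real.log ((Λ 1).det)) := by rw [htel]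
    _ = 2 * Real.log ((Λ (T + 1)).det / (Λ 1).det) := by
        rw [Real.log_div (hdetpos _).ne' (hdetpos _).ne']
end

section
/- Let $Z$ be a bounded random variable with $|Z| \le B$ almost surely, let $\eta > 0$ satisfy $\eta B \le 0.3$, and suppose $\mathbb{E}[Z] \ge 0$ and $\mathbb{E}[Z^2] \le 4 B \cdot \mathbb{E}[Z]$. Then $\log \mathbb{E}[\exp(-\eta Z)] \le -0.25\, \eta\, \mathbb{E}[Z]$. -/
open MeasureTheory

lemma exp_quad_bound {x : ℝ} (hx : |x| ≤ 0.3) : Real.exp x ≤ 1 + x + 0.6 * x ^ 2 := by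
  have hx1 : |x| ≤ 1 := hx.trans (by norm_num)
  have h := Real.exp_bound hx1 (n := 3) (by norm_num)
  have h1 : Real.exp x - ∑ m ∈ Finset.range 3, x ^ m / m.factorial ≤
      |x| ^ 3 * (3 + 1) / (Nat.factorial 3 * 3) := by
    have := (abs_sub_le_iff.1 h).1
    calc Real.exp x - _ ≤ |x| ^ 3 * ((3:ℕ).succ / ((3:ℕ).factorial * 3)) := this
      _ = |x| ^ 3 * (3 + 1) / (Nat.factorial 3 * 3) := by push_cast; ring
  have hsum : ∑ m ∈ Finset.range 3, x ^ m / (m.factorial : ℝ) = 1 + x + x ^ 2 / 2 := by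
    rw [Finset.sum_range_succ, Finset.sum_range_succ, Finset.sum_range_succ]
    norm_num [Nat.factorial]
  rw [hsum] at h1
  norm_num [Nat.factorial] at h1
  have h3 : |x| ^ 3 = |x| * x ^ 2 := by
    rw [← sq_abs x]; ring
  have hx2 : (0:ℝ) ≤ x ^ 2 := sq_nonneg x
  nlinarith [abs_nonneg x, h1, h3]

theorem stmt_9 {Ω : Type*} [MeasurableSpace Ω] (μ : Measure Ω) [IsProbabilityMeasure μ]
    (Z : Ω → ℝ) (hZm : Measurable Z) (B η : ℝ) (hB : 0 ≤ B) (hη : 0 < η)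
    (hbd : ∀ᵐ ω ∂μ, |Z ω| ≤ B) (hηB : η * B ≤ 0.3)
    (hmean : 0 ≤ ∫ ω, Z ω ∂μ)
    (hvar : ∫ ω, (Z ω) ^ 2 ∂μ ≤ 4 * B * ∫ ω, Z ω ∂μ) :
    Real.log (∫ ω, Real.exp (-η * Z ω) ∂μ) ≤ -0.25 * η * ∫ ω, Z ω ∂μ := by
  -- integrability
  have hZint : Integrable Z μ := by
    refine Integrable.mono' (integrable_const B) hZm.aestronglyMeasurable ?_
    filter_upwards [hbd] with ω h using by simpa using h
  have hZ2int : Integrable (fun ω => (Z ω) ^ 2) μ := by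
    refine Integrable.mono' (integrable_const (B ^ 2)) (hZm.pow_const 2).aestronglyMeasurable ?_
    filter_upwards [hbd] with ω h
    simp only [Real.norm_eq_abs, abs_pow, ← sq_abs (Z ω)]
    rw [sq_abs]
    exact pow_le_pow_left₀ (abs_nonneg _) h 2
  have hexpint : Integrable (fun ω => Real.exp (-η * Z ω)) μ := by
    refine Integrable.mono' (integrable_const (Real.exp (η * B)))
      (Real.measurable_exp.comp ((measurable_const.mul hZm))).aestronglyMeasurable ?_
    filter_upwards [hbd] with ω h
    rw [Real.norm_eq_abs, abs_of_pos (Real.exp_pos _), Real.exp_le_exp]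
    nlinarith [abs_le.1 h |>.1]
  -- pointwise bound
  have hpt : ∀ᵐ ω ∂μ, Real.exp (-η * Z ω) ≤ 1 + (-η * Z ω) + 0.6 * η ^ 2 * (Z ω) ^ 2 := by
    filter_upwards [hbd] with ω h
    have habs : |(-η) * Z ω| ≤ 0.3 := by
      rw [abs_mul, abs_neg, abs_of_pos hη]
      calc η * |Z ω| ≤ η * B := by nlinarith
        _ ≤ 0.3 := hηB
    have := exp_quad_bound habs
    calc Real.exp (-η * Z ω) = Real.exp ((-η) * Z ω) := by ring_nf
      _ ≤ 1 + (-η) * Z ω + 0.6 * ((-η) * Z ω) ^ 2 := this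
      _ = 1 + (-η * Z ω) + 0.6 * η ^ 2 * (Z ω) ^ 2 := by ring
  -- integral bound
  have hrhsint : Integrable (fun ω => 1 + (-η * Z ω) + 0.6 * η ^ 2 * (Z ω) ^ 2) μ :=
    ((integrable_const 1).add (hZint.const_mul _)).add (hZ2int.const_mul _)
  have hint_le : ∫ ω, Real.exp (-η * Z ω) ∂μ ≤
      1 - η * ∫ ω, Z ω ∂μ + 0.6 * η ^ 2 * ∫ ω, (Z ω) ^ 2 ∂μ := by
    calc ∫ ω, Real.exp (-η * Z ω) ∂μ
        ≤ ∫ ω, (1 + (-η * Z ω) + 0.6 * η ^ 2 * (Z ω) ^ 2) ∂μ :=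
          integral_mono_ae hexpint hrhsint hpt
      _ = 1 - η * ∫ ω, Z ω ∂μ + 0.6 * η ^ 2 * ∫ ω, (Z ω) ^ 2 ∂μ := by
          have ia : Integrable (fun ω => 1 + -η * Z ω) μ := by
            simpa using (integrable_const (1:ℝ)).add (hZint.const_mul (-η))
          rw [integral_add ia (hZ2int.const_mul _),
            integral_add (integrable_const 1) (hZint.const_mul (-η)), integral_const,
            integral_const_mul, integral_const_mul]
          simp
          ring
  have key : 1 - η * ∫ ω, Z ω ∂μ + 0.6 * η ^ 2 * ∫ ω, (Z ω) ^ 2 ∂μ ≤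
      1 - 0.25 * η * ∫ ω, Z ω ∂μ := by
    have h1 : 0.6 * η ^ 2 * ∫ ω, (Z ω) ^ 2 ∂μ ≤ 0.6 * η ^ 2 * (4 * B * ∫ ω, Z ω ∂μ) := by
      apply mul_le_mul_of_nonneg_left hvar; positivity
    nlinarith [mul_nonneg hη.le hmean]
  have hpos : 0 < ∫ ω, Real.exp (-η * Z ω) ∂μ := by
    have hlow : ∀ᵐ ω ∂μ, Real.exp (-(η * B)) ≤ Real.exp (-η * Z ω) := by
      filter_upwards [hbd] with ω h
      rw [Real.exp_le_exp]
      nlinarith [abs_le.1 h |>.2]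
    have := integral_mono_ae (integrable_const (Real.exp (-(η * B)))) hexpint hlow
    rw [integral_const] at this
    simp only [probReal_univ, ENNReal.toReal_one, one_smul] at this
    exact lt_of_lt_of_le (Real.exp_pos _) this
  calc Real.log (∫ ω, Real.exp (-η * Z ω) ∂μ)
      ≤ (∫ ω, Real.exp (-η * Z ω) ∂μ) - 1 := Real.log_le_sub_one_of_pos hpos
    _ ≤ -0.25 * η * ∫ ω, Z ω ∂μ := by nlinarith [hint_le, key]
end

section
/- ($\ell_2$ eluder lemma) Suppose $\{w_t\}_{t\in[T]} \subset \mathbb{R}^d$, $\{x_{t,i}\}_{(t,i)\in[T]\times[I]} \subset \mathbb{R}^d$, and $\{p_t \in \Delta_{[I]}\}_{t\in[T]}$ satisfy, for all $t\in[T]$: (i) $\sum_{s=1}^{t-1}\sum_{i=1}^I p_s(i)\,|w_t^\top x_{s,i}|^2 \le \gamma_t$; (ii) $\sum_{i=1}^I p_t(i)\,\|x_{t,i}\|_2^2 \le R_x^2$; (iii) $\|w_t\|_2 \le R_w$. Then for any $R > 0$, $\sum_{t=1}^T \min\left\{R, \sum_{i=1}^I p_t(i)\,|w_t^\top x_{t,i}|\right\}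 \le \sqrt{2d\left(R^2 T + \sum_{t=1}^T \gamma_t\right) \log\left(1 + \frac{T R_x^2 R_w^2}{R^2}\right)}$. -/
open Matrix Finset
open scoped RealInnerProductSpace

namespace EluderAux



variable {d : ℕ}

lemma quad_outer (v y : Fin d → ℝ) : y ⬝ᵥ (vecMulVec v v *ᵥ y) = (v ⬝ᵥ y)^2 := by
  simp [dotProduct, mulVec, vecMulVec_apply, Finset.mul_sum, Finset.sum_mul, pow_two]
  rw [Finset.sum_comm]
  congr 1; ext i; congr 1; ext j; ring

lemma outer_psd (v : Fin d → ℝ) : (vecMulVec v v).PosSemidef := by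
  refine PosSemidef.of_dotProduct_mulVec_nonneg ?_ ?_
  · ext i j
    simp [vecMulVec_apply, Matrix.conjTranspose_apply, mul_comm]
  · intro y
    simp only [star_trivial, RCLike.re_to_real]
    rw [quad_outer]
    positivity

lemma psd_smul {A : Matrix (Fin d) (Fin d) ℝ} (hA : A.PosSemidef) {c : ℝ} (hc : 0 ≤ c) :
    (c • A).PosSemidef := by
  refine PosSemidef.of_dotProduct_mulVec_nonneg ?_ ?_
  · ext i j
    have := hA.1
    simp only [Matrix.smul_apply, Matrix.conjTranspose_apply, star_trivial, smul_eq_mul]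
    rw [← congrFun (congrFun this i) j]
    simp [Matrix.conjTranspose_apply]
  · intro y
    have h := hA.dotProduct_mulVec_nonneg y
    simp only [star_trivial] at h ⊢
    rw [Matrix.smul_mulVec, dotProduct_smul]
    exact mul_nonneg hc h

lemma psd_sum {ι : Type*} (s : Finset ι) (f : ι → Matrix (Fin d) (Fin d) ℝ)
    (hf : ∀ i ∈ s, (f i).PosSemidef) : (∑ i ∈ s, f i).PosSemidef := by
  classical
  induction s using Finset.cons_induction with
  | empty => simpa using Matrix.PosSemidef.zero
  | cons a s ha ih =>
    rw [Finset.sum_cons]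
    exact (hf a (Finset.mem_cons_self a s)).add (ih fun i hi => hf i (Finset.mem_cons_of_mem hi))

lemma posdef_smul_one {lam : ℝ} (hlam : 0 < lam) :
    ((lam • 1 : Matrix (Fin d) (Fin d) ℝ)).PosDef := by
  rw [Matrix.smul_one_eq_diagonal]
  exact Matrix.PosDef.diagonal fun _ => hlam





lemma symm_of_herm {S : Matrix (Fin d) (Fin d) ℝ} (h : S.IsHermitian) : Sᵀ = S := by
  ext i j
  rw [← congrFun (congrFun h.eq i) j]
  simp [Matrix.conjTranspose_apply]

open scoped MatrixOrder in
lemma sqrt_facts {A : Matrix (Fin d) (Fin d) ℝ} (hA : A.PosDef) :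
    ∃ S : Matrix (Fin d) (Fin d) ℝ, S.PosSemidef ∧ S * S = A ∧ IsUnit S.det ∧
      Sᵀ = S ∧ (S⁻¹)ᵀ = S⁻¹ ∧ S⁻¹ * S⁻¹ = A⁻¹ := by
  set S := CFC.sqrt A with hSdef
  have hS : S.PosSemidef := (CFC.sqrt_nonneg A).posSemidef
  have hmul : S * S = A := CFC.sqrt_mul_sqrt_self A hA.posSemidef.nonneg
  have hUnit : IsUnit S.det := by
    have h : S.det * S.det = A.det := by rw [← Matrix.det_mul, hmul]
    have hne : A.det ≠ 0 := ne_of_gt hA.det_pos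
    refine isUnit_iff_ne_zero.2 fun h0 => hne ?_
    rw [← h, h0, mul_zero]
  have hSym : Sᵀ = S := symm_of_herm hS.1
  have hSymInv : (S⁻¹)ᵀ = S⁻¹ := by rw [Matrix.transpose_nonsing_inv, hSym]
  exact ⟨S, hS, hmul, hUnit, hSym, hSymInv, by rw [← hmul, Matrix.mul_inv_rev]⟩

/-- Cauchy–Schwarz for the bilinear form of a positive definite matrix. -/
lemma cs_posdef {A : Matrix (Fin d) (Fin d) ℝ} (hA : A.PosDef) (w x : Fin d → ℝ) :
    (w ⬝ᵥ x)^2 ≤ (w ⬝ᵥ (A *ᵥ w)) * (x ⬝ᵥ (A⁻¹ *ᵥ x)) := by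
  obtain ⟨S, hS, hmul, hUnit, hSym, hSymInv, hinv⟩ := sqrt_facts hA
  have key : w ⬝ᵥ x = (S *ᵥ w) ⬝ᵥ (S⁻¹ *ᵥ x) := by
    rw [dotProduct_mulVec, Matrix.vecMul_mulVec, hSym, Matrix.mul_nonsing_inv _ hUnit,
      Matrix.vecMul_one]
  have h1 : (S *ᵥ w) ⬝ᵥ (S *ᵥ w) = w ⬝ᵥ (A *ᵥ w) := by
    rw [dotProduct_mulVec, Matrix.vecMul_mulVec, hSym, hmul, Matrix.dotProduct_mulVec]
  have h2 : (S⁻¹ *ᵥ x) ⬝ᵥ (S⁻¹ *ᵥ x) = x ⬝ᵥ (A⁻¹ *ᵥ x) := by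
    rw [dotProduct_mulVec, Matrix.vecMul_mulVec, hSymInv, hinv, Matrix.dotProduct_mulVec]
  have cs : ((S *ᵥ w) ⬝ᵥ (S⁻¹ *ᵥ x))^2 ≤
      ((S *ᵥ w) ⬝ᵥ (S *ᵥ w)) * ((S⁻¹ *ᵥ x) ⬝ᵥ (S⁻¹ *ᵥ x)) := by
    simpa only [dotProduct, pow_two] using
      Finset.sum_mul_sq_le_sq_mul_sq Finset.univ (fun i => (S *ᵥ w) i) (fun i => (S⁻¹ *ᵥ x) i)
  rw [key, ← h1, ← h2]
  exact cs





lemma trace_eq_sum_eigenvalues {N : Matrix (Fin d) (Fin d) ℝ} (hN : N.IsHermitian) :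
    N.trace = ∑ i, hN.eigenvalues i := by
  simpa using hN.trace_eq_sum_eigenvalues

lemma eig_ge {N : Matrix (Fin d) (Fin d) ℝ} (hN : N.IsHermitian) {lam : ℝ}
    (h : (N - lam • (1 : Matrix (Fin d) (Fin d) ℝ)).PosSemidef) (i : Fin d) :
    lam ≤ hN.eigenvalues i := by
  have hv := hN.eigenvectorBasis.orthonormal.1 i
  set v : Fin d → ℝ := ⇑(hN.eigenvectorBasis i) with hvdef
  have hvv : v ⬝ᵥ v = 1 := by
    have h2 : ⟪(hN.eigenvectorBasis i), (hN.eigenvectorBasis i)⟫ = (1:ℝ) := by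
      rw [real_inner_self_eq_norm_sq, hv]; norm_num
    rw [EuclideanSpace.inner_eq_star_dotProduct] at h2
    simpa [hvdef] using h2
  have heq := hN.eigenvalues_eq i
  have hq := h.dotProduct_mulVec_nonneg v
  simp only [star_trivial, RCLike.re_to_real] at heq hq
  rw [Matrix.sub_mulVec, dotProduct_sub, Matrix.smul_mulVec, Matrix.one_mulVec,
    dotProduct_smul, hvv] at hq
  rw [heq]
  simp only [smul_eq_mul, mul_one] at hq
  linarith





lemma one_add_sum_le_prod {ι : Type*} (s : Finset ι) (f : ι → ℝ) (hf : ∀ i ∈ s, 0 ≤ f i) :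
    1 + ∑ i ∈ s, f i ≤ ∏ i ∈ s, (1 + f i) := by
  classical
  induction s using Finset.cons_induction with
  | empty => simp
  | cons a s ha ih =>
    rw [Finset.sum_cons, Finset.prod_cons]
    have h1 : 1 + ∑ i ∈ s, f i ≤ ∏ i ∈ s, (1 + f i) :=
      ih fun i hi => hf i (Finset.mem_cons_of_mem hi)
    have hfa : 0 ≤ f a := hf a (Finset.mem_cons_self a s)
    have hsum : 0 ≤ ∑ i ∈ s, f i := Finset.sum_nonneg fun i hi => hf i (Finset.mem_cons_of_mem hi)
    nlinarith


lemma det_one_add_ge {M : Matrix (Fin d) (Fin d) ℝ} (hM : M.PosSemidef) :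
    1 + M.trace ≤ (1 + M).det := by
  have hN : (1 + M).IsHermitian := Matrix.isHermitian_one.add hM.1
  have hsub : ((1 + M) - (1:ℝ) • (1 : Matrix (Fin d) (Fin d) ℝ)).PosSemidef := by
    simpa using hM
  have heig : ∀ i, 1 ≤ hN.eigenvalues i := fun i => eig_ge hN hsub i
  have hdet : (1 + M).det = ∏ i, hN.eigenvalues i := by
    have := hN.det_eq_prod_eigenvalues
    simpa using this
  have htr : (1 + M).trace = ∑ i, hN.eigenvalues i := trace_eq_sum_eigenvalues hN
  have htrM : M.trace = ∑ i, (hN.eigenvalues i - 1) := by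
    have h1 : (1 + M).trace = (d:ℝ) + M.trace := by
      simp [Matrix.trace_add, Matrix.trace_one]
    rw [Finset.sum_sub_distrib]
    simp only [Finset.sum_const, Finset.card_univ, Fintype.card_fin, nsmul_eq_mul, mul_one]
    rw [← htr, h1]; ring
  have key : 1 + ∑ i, (hN.eigenvalues i - 1) ≤ ∏ i, (1 + (hN.eigenvalues i - 1)) :=
    one_add_sum_le_prod _ _ fun i _ => by linarith [heig i]
  rw [hdet, htrM]
  simpa using key


lemma det_add_ge {A B : Matrix (Fin d) (Fin d) ℝ} (hA : A.PosDef) (hB : B.PosSemidef) :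
    A.det * (1 + (A⁻¹ * B).trace) ≤ (A + B).det := by
  obtain ⟨S, hS, hmul, hUnit, hSym, hSymInv, hinv⟩ := sqrt_facts hA
  set M := S⁻¹ * B * S⁻¹ with hMdef
  have hMpsd : M.PosSemidef := by
    have h := hB.mul_mul_conjTranspose_same S⁻¹
    have hct : (S⁻¹)ᴴ = S⁻¹ := by
      have : (S⁻¹)ᴴ = (S⁻¹)ᵀ := by ext i j; simp [Matrix.conjTranspose_apply]
      rw [this, hSymInv]
    rwa [hct] at h
  have hid : S * (1 + M) * S = A + B := by
    rw [Matrix.mul_add, Matrix.add_mul, mul_one, hmul]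
    congr 1
    simp only [hMdef, ← mul_assoc]
    rw [Matrix.mul_nonsing_inv _ hUnit, one_mul, mul_assoc, Matrix.nonsing_inv_mul _ hUnit,
      mul_one]
  have hdet : (A + B).det = A.det * (1 + M).det := by
    rw [← hid, Matrix.det_mul, Matrix.det_mul]
    rw [show S.det * (1+M).det * S.det = (S.det * S.det) * (1+M).det by ring,
      ← Matrix.det_mul, hmul]
  have htr : M.trace = (A⁻¹ * B).trace := by
    rw [hMdef, Matrix.trace_mul_cycle, hinv]
  have hge := det_one_add_ge hMpsd
  rw [hdet, ← htr]
  have hApos : 0 < A.det := hA.det_pos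
  nlinarith [hge, hApos]






lemma det_le_of_trace_le {C : Matrix (Fin d) (Fin d) ℝ} (hC : C.PosSemidef) {lam c : ℝ}
    (hlam : 0 < lam) (htr : C.trace ≤ c) :
    (lam • (1 : Matrix (Fin d) (Fin d) ℝ) + C).det ≤ (lam + c) ^ d := by
  set N := lam • (1 : Matrix (Fin d) (Fin d) ℝ) + C with hNdef
  have hone : ((1:Matrix (Fin d) (Fin d) ℝ)).IsHermitian := Matrix.isHermitian_one
  have hN : N.IsHermitian := by
    refine Matrix.IsHermitian.add ?_ hC.1
    rw [Matrix.smul_one_eq_diagonal]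
    exact Matrix.isHermitian_diagonal _
  have hsub : (N - lam • (1 : Matrix (Fin d) (Fin d) ℝ)).PosSemidef := by
    simpa [hNdef] using hC
  have heig : ∀ i, lam ≤ hN.eigenvalues i := fun i => eig_ge hN hsub i
  have htrN : N.trace = lam * d + C.trace := by
    simp [hNdef, Matrix.trace_add, Matrix.trace_smul, Matrix.trace_one, mul_comm]
  have hsum : ∑ i, hN.eigenvalues i = lam * d + C.trace := by
    rw [← trace_eq_sum_eigenvalues hN, htrN]
  have hub : ∀ i : Fin d, hN.eigenvalues i ≤ lam + c := by
    intro i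
    have hle : hN.eigenvalues i - lam ≤ ∑ j, (hN.eigenvalues j - lam) := by
      refine Finset.single_le_sum (f := fun j => hN.eigenvalues j - lam) ?_ (Finset.mem_univ i)
      intro j _
      show 0 ≤ hN.eigenvalues j - lam
      linarith [heig j]
    have hsum2 : ∑ j, (hN.eigenvalues j - lam) = C.trace := by
      rw [Finset.sum_sub_distrib, hsum]
      simp [Finset.card_univ, mul_comm]
    rw [hsum2] at hle
    linarith
  have hdet : N.det = ∏ i, hN.eigenvalues i := by
    have := hN.det_eq_prod_eigenvalues
    simpa using this
  rw [hdet]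
  calc ∏ i, hN.eigenvalues i ≤ ∏ _i : Fin d, (lam + c) :=
        Finset.prod_le_prod (fun i _ => le_trans hlam.le (heig i)) (fun i _ => hub i)
    _ = (lam + c) ^ d := by simp [Finset.prod_const, Finset.card_univ]




variable {d T I : ℕ}


noncomputable def Bmat (p : Fin T → Fin I → ℝ) (x : Fin T → Fin I → Fin d → ℝ) (t : Fin T) :
    Matrix (Fin d) (Fin d) ℝ := ∑ i, p t i • Matrix.vecMulVec (x t i) (x t i)

noncomputable def Sig (p : Fin T → Fin I → ℝ) (x : Fin T → Fin I → Fin d → ℝ) (lam : ℝ)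
    (k : ℕ) : Matrix (Fin d) (Fin d) ℝ :=
  lam • 1 + ∑ s ∈ Finset.univ.filter (fun s : Fin T => (s : ℕ) < k), Bmat p x s

variable {p : Fin T → Fin I → ℝ} {x : Fin T → Fin I → Fin d → ℝ} {lam : ℝ}

lemma Bmat_psd (hp0 : ∀ t i, 0 ≤ p t i) (t : Fin T) : (Bmat p x t).PosSemidef :=
  psd_sum _ _ fun i _ => psd_smul (outer_psd _) (hp0 t i)

lemma Sig_posdef (hp0 : ∀ t i, 0 ≤ p t i) (hlam : 0 < lam) (k : ℕ) :
    (Sig p x lam k).PosDef :=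
  (posdef_smul_one hlam).add_posSemidef
    (psd_sum _ _ fun s _ => Bmat_psd hp0 s)

lemma Sig_succ {k : ℕ} (hk : k < T) :
    Sig p x lam (k+1) = Sig p x lam k + Bmat p x ⟨k, hk⟩ := by
  rw [Sig, Sig, add_assoc]
  congr 1
  have : Finset.univ.filter (fun s : Fin T => (s : ℕ) < k + 1)
      = insert (⟨k, hk⟩ : Fin T) (Finset.univ.filter (fun s : Fin T => (s : ℕ) < k)) := by
    ext s
    simp only [Finset.mem_filter, Finset.mem_univ, true_and, Finset.mem_insert, Fin.ext_iff]
    omega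
  rw [this, Finset.sum_insert (by simp)]
  exact add_comm _ _

lemma dot_mulVec_sum {ι : Type*} (s : Finset ι) (M : ι → Matrix (Fin d) (Fin d) ℝ)
    (y : Fin d → ℝ) :
    y ⬝ᵥ ((∑ i ∈ s, M i) *ᵥ y) = ∑ i ∈ s, y ⬝ᵥ (M i *ᵥ y) := by
  classical
  induction s using Finset.cons_induction with
  | empty => simp
  | cons a s ha ih => rw [Finset.sum_cons, Finset.sum_cons, Matrix.add_mulVec, dotProduct_add, ih]

lemma dot_mulVec_smul (c : ℝ) (M : Matrix (Fin d) (Fin d) ℝ) (y : Fin d → ℝ) :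
    y ⬝ᵥ ((c • M) *ᵥ y) = c * (y ⬝ᵥ (M *ᵥ y)) := by
  rw [Matrix.smul_mulVec, dotProduct_smul, smul_eq_mul]

lemma Bmat_quad (t : Fin T) (y : Fin d → ℝ) :
    y ⬝ᵥ (Bmat p x t *ᵥ y) = ∑ i, p t i * (x t i ⬝ᵥ y)^2 := by
  rw [Bmat, dot_mulVec_sum]
  exact Finset.sum_congr rfl fun i _ => by rw [dot_mulVec_smul, quad_outer (x t i) y]

lemma Sig_quad (k : ℕ) (y : Fin d → ℝ) :
    y ⬝ᵥ (Sig p x lam k *ᵥ y)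
      = lam * (y ⬝ᵥ y) + ∑ s ∈ Finset.univ.filter (fun s : Fin T => (s : ℕ) < k),
          ∑ i, p s i * (x s i ⬝ᵥ y)^2 := by
  rw [Sig, Matrix.add_mulVec, dotProduct_add, Matrix.smul_mulVec, Matrix.one_mulVec,
    dotProduct_smul, smul_eq_mul]
  congr 1
  rw [dot_mulVec_sum]
  exact Finset.sum_congr rfl fun s _ => Bmat_quad s y

lemma Bmat_trace_inv (A : Matrix (Fin d) (Fin d) ℝ) (t : Fin T) :
    (A * Bmat p x t).trace = ∑ i, p t i * (x t i ⬝ᵥ (A *ᵥ x t i)) := by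
  rw [Bmat, Finset.mul_sum, Matrix.trace_sum]
  congr 1; ext i
  rw [Matrix.mul_smul, Matrix.trace_smul]
  have : (A * Matrix.vecMulVec (x t i) (x t i)).trace = x t i ⬝ᵥ (A *ᵥ x t i) := by
    simp [Matrix.trace, Matrix.diag, Matrix.mul_apply, vecMulVec_apply, dotProduct,
      Matrix.mulVec, Finset.mul_sum, Finset.sum_mul]
    congr 1; ext a; congr 1; ext b; ring
  rw [this]; simp


noncomputable def uu (p : Fin T → Fin I → ℝ) (x : Fin T → Fin I → Fin d → ℝ) (lam : ℝ)
    (s : Fin T) : ℝ :=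
  ∑ i, p s i * (x s i ⬝ᵥ ((Sig p x lam (s : ℕ))⁻¹ *ᵥ x s i))

lemma uu_nonneg (hp0 : ∀ t i, 0 ≤ p t i) (hlam : 0 < lam) (s : Fin T) :
    0 ≤ uu p x lam s := by
  refine Finset.sum_nonneg fun i _ => mul_nonneg (hp0 s i) ?_
  have h := ((Sig_posdef (p := p) (x := x) hp0 hlam (s : ℕ)).inv).posSemidef.dotProduct_mulVec_nonneg (x s i)
  simpa using h

lemma potential (hp0 : ∀ t i, 0 ≤ p t i) (hlam : 0 < lam) :
    ∀ k, k ≤ T →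
      lam ^ d * ∏ s ∈ Finset.univ.filter (fun s : Fin T => (s : ℕ) < k), (1 + uu p x lam s)
        ≤ (Sig p x lam k).det := by
  intro k
  induction k with
  | zero =>
    intro _
    have h0 : Finset.univ.filter (fun s : Fin T => (s : ℕ) < 0) = ∅ := by
      ext s; simp
    rw [h0, Sig, h0]
    simp [Matrix.det_smul]
  | succ k ih =>
    intro hk
    have hkT : k < T := hk
    have hins : Finset.univ.filter (fun s : Fin T => (s : ℕ) < k + 1)
        = insert (⟨k, hkT⟩ : Fin T) (Finset.univ.filter (fun s : Fin T => (s : ℕ) < k)) := by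
      ext s
      simp only [Finset.mem_filter, Finset.mem_univ, true_and, Finset.mem_insert, Fin.ext_iff]
      omega
    have hpos := Sig_posdef (p := p) (x := x) hp0 hlam k
    have hdet := det_add_ge hpos (Bmat_psd (x := x) hp0 ⟨k, hkT⟩)
    have htr : ((Sig p x lam k)⁻¹ * Bmat p x ⟨k, hkT⟩).trace = uu p x lam ⟨k, hkT⟩ := by
      rw [Bmat_trace_inv]; rfl
    rw [htr] at hdet
    rw [hins, Finset.prod_insert (by simp), Sig_succ hkT]
    have huu := uu_nonneg (p := p) (x := x) hp0 hlam ⟨k, hkT⟩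
    have hih := ih (le_of_lt hkT)
    have hdetpos : 0 < (Sig p x lam k).det := hpos.det_pos
    nlinarith [hih, hdet, huu, hdetpos,
      Finset.prod_nonneg (s := Finset.univ.filter (fun s : Fin T => (s : ℕ) < k))
        (f := fun s => 1 + uu p x lam s)
        (fun s _ => by
          show (0:ℝ) ≤ 1 + uu p x lam s
          linarith [uu_nonneg (p := p) (x := x) hp0 hlam s]),
      pow_pos hlam d]

lemma Bmat_trace (t : Fin T) : (Bmat p x t).trace = ∑ i, p t i * (x t i ⬝ᵥ x t i) := by
  have := Bmat_trace_inv (p := p) (x := x) (1 : Matrix (Fin d) (Fin d) ℝ) t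
  rw [one_mul] at this
  rw [this]
  simp [Matrix.one_mulVec]

lemma sum_log_le (hp0 : ∀ t i, 0 ≤ p t i) (hlam : 0 < lam) {c : ℝ}
    (hc : ∀ t : Fin T, ∑ i, p t i * (x t i ⬝ᵥ x t i) ≤ c) :
    ∑ s : Fin T, Real.log (1 + uu p x lam s)
      ≤ d * Real.log (1 + T * c / lam) := by
  have hTc : 0 ≤ (T : ℝ) * c := by
    rcases Nat.eq_zero_or_pos T with hT | hT
    · simp [hT]
    · have t0 : Fin T := ⟨0, hT⟩
      have h1 : 0 ≤ ∑ i, p t0 i * (x t0 i ⬝ᵥ x t0 i) :=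
        Finset.sum_nonneg fun i _ => mul_nonneg (hp0 t0 i) (by
          have h0 : (0:ℝ) ≤ ∑ j, x t0 i j * x t0 i j :=
            Finset.sum_nonneg fun j _ => mul_self_nonneg _
          simpa [dotProduct] using h0)
      exact mul_nonneg (by positivity) (le_trans h1 (hc t0))
  -- trace bound on the final Gram matrix
  have hCtr : (∑ s ∈ Finset.univ.filter (fun s : Fin T => (s : ℕ) < T), Bmat p x s).trace
      ≤ T * c := by
    rw [Matrix.trace_sum]
    calc ∑ s ∈ Finset.univ.filter (fun s : Fin T => (s : ℕ) < T), (Bmat p x s).trace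
        ≤ ∑ s ∈ Finset.univ.filter (fun s : Fin T => (s : ℕ) < T), c := by
          refine Finset.sum_le_sum fun s _ => ?_
          rw [Bmat_trace]; exact hc s
      _ ≤ T * c := by
          have : Finset.univ.filter (fun s : Fin T => (s : ℕ) < T) = Finset.univ := by
            ext s; simp [s.isLt]
          rw [this]; simp
  have hdetle : (Sig p x lam T).det ≤ (lam + T * c) ^ d := by
    rw [Sig]
    exact det_le_of_trace_le (psd_sum _ _ fun s _ => Bmat_psd hp0 s) hlam hCtr
  have hpot := potential (p := p) (x := x) hp0 hlam T le_rfl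
  have huniv : Finset.univ.filter (fun s : Fin T => (s : ℕ) < T) = Finset.univ := by
    ext s; simp [s.isLt]
  rw [huniv] at hpot
  set P := ∏ s : Fin T, (1 + uu p x lam s) with hP
  have hfac : ∀ s : Fin T, (0:ℝ) < 1 + uu p x lam s := fun s => by
    linarith [uu_nonneg (p := p) (x := x) hp0 hlam s]
  have hPpos : 0 < P := Finset.prod_pos fun s _ => hfac s
  have hPle : P ≤ (1 + T * c / lam) ^ d := by
    have h1 : lam ^ d * P ≤ (lam + T * c) ^ d := le_trans hpot hdetle
    have h2 : (lam + T * c) ^ d = lam ^ d * (1 + T * c / lam) ^ d := by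
      rw [← mul_pow]
      congr 1
      field_simp
    rw [h2] at h1
    exact le_of_mul_le_mul_left h1 (pow_pos hlam d)
  have hlog : ∑ s : Fin T, Real.log (1 + uu p x lam s) = Real.log P := by
    rw [hP, Real.log_prod]
    exact fun s _ => ne_of_gt (hfac s)
  rw [hlog]
  calc Real.log P ≤ Real.log ((1 + T * c / lam) ^ d) := Real.log_le_log hPpos hPle
    _ = d * Real.log (1 + T * c / lam) := by rw [Real.log_pow]





lemma min_le_two_log {u : ℝ} (hu : 0 ≤ u) : min 1 u ≤ 2 * Real.log (1 + u) := by
  have h1u : (0:ℝ) < 1 + u := by linarith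
  have hlog : u / (1 + u) ≤ Real.log (1 + u) := by
    have h := Real.log_le_sub_one_of_pos (x := (1 + u)⁻¹) (by positivity)
    rw [Real.log_inv] at h
    have : 1 - (1+u)⁻¹ ≤ Real.log (1+u) := by linarith
    calc u / (1+u) = 1 - (1+u)⁻¹ := by field_simp; ring
      _ ≤ Real.log (1+u) := this
  rcases le_total u 1 with h | h
  · rw [min_eq_right h]
    have : u ≤ 2 * (u / (1+u)) := by
      rw [mul_div_assoc', le_div_iff₀ h1u]
      nlinarith
    linarith
  · rw [min_eq_left h]
    have : (1:ℝ) ≤ 2 * (u / (1+u)) := by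
      rw [mul_div_assoc', le_div_iff₀ h1u]
      linarith
    linarith

lemma inner_eq_dot (v u : EuclideanSpace ℝ (Fin d)) :
    ⟪v, u⟫ = (fun j => v j) ⬝ᵥ (fun j => u j) := by
  simp [PiLp.inner_apply, dotProduct, RCLike.inner_apply, mul_comm]

lemma norm_sq_eq_dot (v : EuclideanSpace ℝ (Fin d)) :
    ‖v‖^2 = (fun j => v j) ⬝ᵥ (fun j => v j) := by
  rw [← real_inner_self_eq_norm_sq, inner_eq_dot]


end EluderAux

open Matrix Finset
open scoped RealInnerProductSpace

theorem stmt_13 (d T I : ℕ)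
    (w : Fin T → EuclideanSpace ℝ (Fin d))
    (x : Fin T → Fin I → EuclideanSpace ℝ (Fin d))
    (p : Fin T → Fin I → ℝ) (hp0 : ∀ t i, 0 ≤ p t i) (hp1 : ∀ t, ∑ i, p t i = 1)
    (γ : Fin T → ℝ) (Rx Rw : ℝ)
    (h1 : ∀ t, ∑ s ∈ Finset.univ.filter (· < t), ∑ i, p s i * ⟪w t, x s i⟫ ^ 2 ≤ γ t)
    (h2 : ∀ t, ∑ i, p t i * ‖x t i‖ ^ 2 ≤ Rx ^ 2)
    (h3 : ∀ t, ‖w t‖ ≤ Rw)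
    (R : ℝ) (hR : 0 < R) :
    ∑ t, min R (∑ i, p t i * |⟪w t, x t i⟫|)
      ≤ Real.sqrt (2 * d * (R ^ 2 * T + ∑ t, γ t)
          * Real.log (1 + T * Rx ^ 2 * Rw ^ 2 / R ^ 2)) := by
  classical
  by_cases hRw : 0 < Rw
  swap
  · -- degenerate case: all `w t` vanish
    have hw0 : ∀ t, w t = 0 := fun t =>
      norm_le_zero_iff.mp (le_trans (h3 t) (not_lt.mp hRw))
    have hz : ∀ t : Fin T, min R (∑ i, p t i * |⟪w t, x t i⟫|) = 0 := by
      intro t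
      rw [hw0 t]
      simp [min_eq_right hR.le]
    rw [Finset.sum_congr rfl fun t _ => hz t]
    simp [Real.sqrt_nonneg]
  -- main case
  have hRne : R ≠ 0 := ne_of_gt hR
  have hRwne : Rw ≠ 0 := ne_of_gt hRw
  set lam : ℝ := R ^ 2 / Rw ^ 2 with hlamdef
  have hlam : 0 < lam := by positivity
  set X : Fin T → Fin I → Fin d → ℝ := fun t i j => x t i j with hXdef
  set W : Fin T → Fin d → ℝ := fun t j => w t j with hWdef
  have hγ0 : ∀ t, 0 ≤ γ t := fun t =>
    le_trans (Finset.sum_nonneg fun s _ => Finset.sum_nonneg fun i _ =>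
      mul_nonneg (hp0 s i) (sq_nonneg _)) (h1 t)
  have hinner : ∀ (a : EuclideanSpace ℝ (Fin d)) (t : Fin T) (i : Fin I),
      ⟪a, x t i⟫ = (fun j => a j) ⬝ᵥ X t i := fun a t i => EluderAux.inner_eq_dot a (x t i)
  have hu0 : ∀ t, 0 ≤ EluderAux.uu p X lam t := EluderAux.uu_nonneg hp0 hlam
  -- Step A : pointwise bound
  have stepA : ∀ t : Fin T, min R (∑ i, p t i * |⟪w t, x t i⟫|)
      ≤ Real.sqrt ((R ^ 2 + γ t) * min 1 (EluderAux.uu p X lam t)) := by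
    intro t
    have hpos := EluderAux.Sig_posdef (p := p) (x := X) hp0 hlam (t : ℕ)
    set Sg := EluderAux.Sig p X lam (t : ℕ) with hSgdef
    -- quadratic form bound on w t
    have hqf : W t ⬝ᵥ (Sg *ᵥ W t) ≤ R ^ 2 + γ t := by
      rw [hSgdef, EluderAux.Sig_quad]
      have hnorm : W t ⬝ᵥ W t = ‖w t‖ ^ 2 := (EluderAux.norm_sq_eq_dot (w t)).symm
      have e1 : lam * (W t ⬝ᵥ W t) ≤ R ^ 2 := by
        rw [hnorm]
        have hle : ‖w t‖ ^ 2 ≤ Rw ^ 2 := by nlinarith [norm_nonneg (w t), h3 t]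
        calc lam * ‖w t‖ ^ 2 ≤ lam * Rw ^ 2 := by nlinarith
          _ = R ^ 2 := by rw [hlamdef]; field_simp
      have e2 : ∑ s ∈ Finset.univ.filter (fun s : Fin T => (s : ℕ) < (t : ℕ)),
          ∑ i, p s i * (X s i ⬝ᵥ W t) ^ 2 ≤ γ t := by
        have hfe : Finset.univ.filter (fun s : Fin T => (s : ℕ) < (t : ℕ))
            = Finset.univ.filter (· < t) := by
          ext s
          simp only [Finset.mem_filter, Finset.mem_univ, true_and]
          exact Iff.symm Fin.lt_def
        rw [hfe]
        refine le_trans (le_of_eq ?_) (h1 t)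
        refine Finset.sum_congr rfl fun s _ => Finset.sum_congr rfl fun i _ => ?_
        congr 1
      linarith
    have hqf0 : 0 ≤ W t ⬝ᵥ (Sg *ᵥ W t) := by
      have := hpos.posSemidef.dotProduct_mulVec_nonneg (W t)
      simpa using this
    set u := EluderAux.uu p X lam t with hudef
    set a := ∑ i, p t i * |⟪w t, x t i⟫| with hadef
    have ha0 : 0 ≤ a :=
      Finset.sum_nonneg fun i _ => mul_nonneg (hp0 t i) (abs_nonneg _)
    -- v i : inverse quadratic forms
    set v : Fin I → ℝ := fun i => X t i ⬝ᵥ ((Sg)⁻¹ *ᵥ X t i) with hvdef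
    have hv0 : ∀ i, 0 ≤ v i := by
      intro i
      have := hpos.inv.posSemidef.dotProduct_mulVec_nonneg (X t i)
      simpa using this
    have huv : u = ∑ i, p t i * v i := rfl
    -- Cauchy–Schwarz pointwise
    have hai : a ≤ Real.sqrt (W t ⬝ᵥ (Sg *ᵥ W t)) * Real.sqrt u := by
      have step1 : a ≤ ∑ i, p t i * (Real.sqrt (W t ⬝ᵥ (Sg *ᵥ W t)) * Real.sqrt (v i)) := by
        refine Finset.sum_le_sum fun i _ => ?_
        refine mul_le_mul_of_nonneg_left ?_ (hp0 t i)
        have hcs := EluderAux.cs_posdef hpos (W t) (X t i)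
        have : |⟪w t, x t i⟫| = Real.sqrt ((W t ⬝ᵥ X t i) ^ 2) := by
          rw [Real.sqrt_sq_eq_abs, hinner]
        rw [this, ← Real.sqrt_mul hqf0]
        exact Real.sqrt_le_sqrt hcs
      have step2 : ∑ i, p t i * Real.sqrt (v i) ≤ Real.sqrt u := by
        refine Real.le_sqrt_of_sq_le ?_
        have hj : (∑ i, p t i * Real.sqrt (v i)) ^ 2
            ≤ (∑ i, p t i) * ∑ i, p t i * v i := by
          refine Finset.sum_sq_le_sum_mul_sum_of_sq_eq_mul Finset.univ
            (f := fun i => p t i) (g := fun i => p t i * v i) ?_ ?_ ?_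
          · exact fun i _ => hp0 t i
          · exact fun i _ => mul_nonneg (hp0 t i) (hv0 i)
          · intro i _
            rw [mul_pow, Real.sq_sqrt (hv0 i)]
            ring
        rw [hp1 t, one_mul] at hj
        rw [huv]
        exact hj
      calc a ≤ ∑ i, p t i * (Real.sqrt (W t ⬝ᵥ (Sg *ᵥ W t)) * Real.sqrt (v i)) := step1
        _ = Real.sqrt (W t ⬝ᵥ (Sg *ᵥ W t)) * ∑ i, p t i * Real.sqrt (v i) := by
            rw [Finset.mul_sum]
            exact Finset.sum_congr rfl fun i _ => by ring
        _ ≤ Real.sqrt (W t ⬝ᵥ (Sg *ᵥ W t)) * Real.sqrt u :=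
            mul_le_mul_of_nonneg_left step2 (Real.sqrt_nonneg _)
    rcases le_total u 1 with h | h
    · rw [min_eq_right h]
      calc min R a ≤ a := min_le_right _ _
        _ ≤ Real.sqrt (W t ⬝ᵥ (Sg *ᵥ W t)) * Real.sqrt u := hai
        _ ≤ Real.sqrt (R ^ 2 + γ t) * Real.sqrt u :=
            mul_le_mul_of_nonneg_right (Real.sqrt_le_sqrt hqf) (Real.sqrt_nonneg _)
        _ = Real.sqrt ((R ^ 2 + γ t) * u) :=
            (Real.sqrt_mul (add_nonneg (sq_nonneg R) (hγ0 t)) _).symm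
    · rw [min_eq_left h]
      calc min R a ≤ R := min_le_left _ _
        _ = Real.sqrt (R ^ 2) := (Real.sqrt_sq hR.le).symm
        _ ≤ Real.sqrt ((R ^ 2 + γ t) * 1) := by
            apply Real.sqrt_le_sqrt
            nlinarith [hγ0 t]
  -- Step B : sum up with Cauchy–Schwarz
  have hsum1 : ∑ t, min R (∑ i, p t i * |⟪w t, x t i⟫|)
      ≤ ∑ t : Fin T, Real.sqrt ((R ^ 2 + γ t) * min 1 (EluderAux.uu p X lam t)) :=
    Finset.sum_le_sum fun t _ => stepA t
  have hCS : (∑ t : Fin T, Real.sqrt ((R ^ 2 + γ t) * min 1 (EluderAux.uu p X lam t))) ^ 2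
      ≤ (∑ t : Fin T, (R ^ 2 + γ t)) * ∑ t : Fin T, min 1 (EluderAux.uu p X lam t) := by
    refine Finset.sum_sq_le_sum_mul_sum_of_sq_eq_mul Finset.univ
      (f := fun t => R ^ 2 + γ t) (g := fun t => min 1 (EluderAux.uu p X lam t)) ?_ ?_ ?_
    · exact fun t _ => add_nonneg (sq_nonneg R) (hγ0 t)
    · exact fun t _ => le_min zero_le_one (hu0 t)
    · intro t _
      exact Real.sq_sqrt (mul_nonneg (add_nonneg (sq_nonneg R) (hγ0 t))
        (le_min zero_le_one (hu0 t)))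
  have hsumf : ∑ t : Fin T, (R ^ 2 + γ t) = R ^ 2 * T + ∑ t, γ t := by
    rw [Finset.sum_add_distrib]
    simp [Finset.card_univ, mul_comm]
  -- Step C : elliptical potential
  have hc : ∀ t : Fin T, ∑ i, p t i * (X t i ⬝ᵥ X t i) ≤ Rx ^ 2 := by
    intro t
    refine le_trans (le_of_eq ?_) (h2 t)
    refine Finset.sum_congr rfl fun i _ => ?_
    rw [EluderAux.norm_sq_eq_dot (x t i)]
  have hminsum : ∑ t : Fin T, min 1 (EluderAux.uu p X lam t)
      ≤ 2 * ((d : ℝ) * Real.log (1 + T * Rx ^ 2 / lam)) := by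
    have hlogsum := EluderAux.sum_log_le (p := p) (x := X) hp0 hlam hc
    calc ∑ t : Fin T, min 1 (EluderAux.uu p X lam t)
        ≤ ∑ t : Fin T, 2 * Real.log (1 + EluderAux.uu p X lam t) :=
          Finset.sum_le_sum fun t _ => EluderAux.min_le_two_log (hu0 t)
      _ = 2 * ∑ t : Fin T, Real.log (1 + EluderAux.uu p X lam t) := by rw [Finset.mul_sum]
      _ ≤ 2 * ((d : ℝ) * Real.log (1 + T * Rx ^ 2 / lam)) := by linarith
  -- put everything together
  have hA0 : 0 ≤ R ^ 2 * T + ∑ t, γ t := by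
    have : 0 ≤ ∑ t, γ t := Finset.sum_nonneg fun t _ => hγ0 t
    positivity
  have hfinal : (∑ t : Fin T, Real.sqrt ((R ^ 2 + γ t) * min 1 (EluderAux.uu p X lam t))) ^ 2
      ≤ (R ^ 2 * T + ∑ t, γ t) * (2 * ((d : ℝ) * Real.log (1 + T * Rx ^ 2 / lam))) := by
    refine le_trans hCS ?_
    rw [hsumf]
    exact mul_le_mul_of_nonneg_left hminsum hA0
  have hlameq : 1 + (T : ℝ) * Rx ^ 2 / lam = 1 + T * Rx ^ 2 * Rw ^ 2 / R ^ 2 := by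
    rw [hlamdef]
    field_simp
  have harg : (R ^ 2 * T + ∑ t, γ t) * (2 * ((d : ℝ) * Real.log (1 + T * Rx ^ 2 / lam)))
      = 2 * d * (R ^ 2 * T + ∑ t, γ t) * Real.log (1 + T * Rx ^ 2 * Rw ^ 2 / R ^ 2) := by
    rw [hlameq]; ring
  calc ∑ t, min R (∑ i, p t i * |⟪w t, x t i⟫|)
      ≤ ∑ t : Fin T, Real.sqrt ((R ^ 2 + γ t) * min 1 (EluderAux.uu p X lam t)) := hsum1
    _ ≤ Real.sqrt (2 * d * (R ^ 2 * T + ∑ t, γ t)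
          * Real.log (1 + T * Rx ^ 2 * Rw ^ 2 / R ^ 2)) := by
        refine Real.le_sqrt_of_sq_le ?_
        rw [← harg]
        exact hfinal
end

section
/- (Bucketing bound via distributional eluder dimension, abstracted) Let $(\epsilon^{st})_{1\le s \le t \le T}$ be nonnegative reals, and suppose timesteps with $\epsilon^{tt} > 0$ are assigned to buckets $B^0, B^1, \dots$ by the greedy rule: $t$ joins the smallest-index bucket $i$ such that $\sum_{s \le t-1, s\in B^i} (\epsilon^{st})^2 < (\epsilon^{tt})^2$. Let $b^t$ denote the bucket index of $t$. Then $\sum_{t=1}^T \sum_{s=1}^{t-1} (\epsilon^{st})^2 \ge \sum_{t=1}^T b^t (\epsilon^{tt})^2$. -/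
theorem stmt_17 (T : ℕ) (ε : ℕ → ℕ → ℝ) (hε : ∀ s t, 0 ≤ ε s t)
    (B : ℕ → Finset ℕ) (hBdisj : ∀ i j, i ≠ j → Disjoint (B i) (B j))
    (hBsub : ∀ i, B i ⊆ Finset.Icc 1 T)
    (b : ℕ → ℕ)
    (hgreedy : ∀ t ∈ Finset.Icc 1 T, ∀ i < b t,
      (ε t t) ^ 2 ≤ ∑ s ∈ (B i).filter (· < t), (ε s t) ^ 2) :
    ∑ t ∈ Finset.Icc 1 T, (b t : ℝ) * (ε t t) ^ 2
      ≤ ∑ t ∈ Finset.Icc 1 T, ∑ s ∈ Finset.Icc 1 (t - 1), (ε s t) ^ 2 := by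
  apply Finset.sum_le_sum
  intro t ht
  calc (b t : ℝ) * (ε t t) ^ 2
      = ∑ i ∈ Finset.range (b t), (ε t t) ^ 2 := by
        simp [mul_comm]
    _ ≤ ∑ i ∈ Finset.range (b t), ∑ s ∈ (B i).filter (· < t), (ε s t) ^ 2 := by
        apply Finset.sum_le_sum
        intro i hi
        exact hgreedy t ht i (Finset.mem_range.mp hi)
    _ = ∑ s ∈ (Finset.range (b t)).biUnion (fun i => (B i).filter (· < t)),
          (ε s t) ^ 2 := by
        rw [Finset.sum_biUnion]
        intro i _ j _ hij
        exact Finset.disjoint_filter_filter (hBdisj i j hij)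
    _ ≤ ∑ s ∈ Finset.Icc 1 (t - 1), (ε s t) ^ 2 := by
        apply Finset.sum_le_sum_of_subset_of_nonneg
        · intro s hs
          obtain ⟨i, _, hsi⟩ := Finset.mem_biUnion.mp hs
          obtain ⟨hsB, hst⟩ := Finset.mem_filter.mp hsi
          have := Finset.mem_Icc.mp (hBsub i hsB)
          exact Finset.mem_Icc.mpr ⟨this.1, Nat.le_sub_one_of_lt hst⟩
        · intro s _ _
          positivity
end

section
/- Let $E \ge 1$ be an integer and let $B^1, \dots, B^{T-1}$ be disjoint finite sets of indices, each of size at most $E$, with nonnegative weights $\epsilon_s$ for $s \in \cup_i B^i$. Then $\sum_{i=1}^{T-1} i \sum_{s\in B^i} \epsilon_s^2 \ge \frac{1}{E(1+\log T)} \left(\sum_{i=1}^{T-1} \sum_{s\in B^i} \epsilon_s\right)^2$. -/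
theorem stmt_18 (T E : ℕ) (hE : 1 ≤ E) (hT : 1 ≤ T)
    (B : ℕ → Finset ℕ) (hdisj : ∀ i j, i ≠ j → Disjoint (B i) (B j))
    (hcard : ∀ i, (B i).card ≤ E)
    (ε : ℕ → ℝ) (hε : ∀ s, 0 ≤ ε s) :
    (1 / ((E : ℝ) * (1 + Real.log T))) * (∑ i ∈ Finset.Icc 1 (T - 1), ∑ s ∈ B i, ε s) ^ 2
      ≤ ∑ i ∈ Finset.Icc 1 (T - 1), (i : ℝ) * ∑ s ∈ B i, (ε s) ^ 2 := by
  set x : ℕ → ℝ := fun i => ∑ s ∈ B i, ε s with hx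
  have hlogT : 0 ≤ Real.log T := Real.log_nonneg (by exact_mod_cast hT)
  have hL : (0:ℝ) < 1 + Real.log T := by linarith
  have hEpos : (0:ℝ) < E := by exact_mod_cast hE
  have hxnn : ∀ i, 0 ≤ x i := fun i => Finset.sum_nonneg fun s _ => hε s
  -- Cauchy-Schwarz step
  have hCS : (∑ i ∈ Finset.Icc 1 (T - 1), x i) ^ 2
      ≤ (∑ i ∈ Finset.Icc 1 (T - 1), (1 / (i:ℝ)))
        * (∑ i ∈ Finset.Icc 1 (T - 1), (i:ℝ) * x i ^ 2) := by
    have := Finset.sum_mul_sq_le_sq_mul_sq (Finset.Icc 1 (T - 1))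
      (fun i => Real.sqrt (1 / (i:ℝ))) (fun i => Real.sqrt (i:ℝ) * x i)
    calc (∑ i ∈ Finset.Icc 1 (T - 1), x i) ^ 2
        = (∑ i ∈ Finset.Icc 1 (T - 1),
            Real.sqrt (1 / (i:ℝ)) * (Real.sqrt (i:ℝ) * x i)) ^ 2 := by
          congr 1
          refine Finset.sum_congr rfl fun i hi => ?_
          have hi1 : 1 ≤ i := (Finset.mem_Icc.mp hi).1
          have hip : (0:ℝ) < i := by exact_mod_cast hi1
          rw [← mul_assoc, ← Real.sqrt_mul (by positivity), one_div_mul_cancel hip.ne',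
            Real.sqrt_one, one_mul]
      _ ≤ (∑ i ∈ Finset.Icc 1 (T - 1), Real.sqrt (1 / (i:ℝ)) ^ 2)
            * (∑ i ∈ Finset.Icc 1 (T - 1), (Real.sqrt (i:ℝ) * x i) ^ 2) := this
      _ = (∑ i ∈ Finset.Icc 1 (T - 1), (1 / (i:ℝ)))
            * (∑ i ∈ Finset.Icc 1 (T - 1), (i:ℝ) * x i ^ 2) := by
          congr 1
          · exact Finset.sum_congr rfl fun i hi => Real.sq_sqrt (by positivity)
          · refine Finset.sum_congr rfl fun i hi => ?_
            rw [mul_pow, Real.sq_sqrt (by positivity)]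
  -- harmonic bound
  have hharm : (∑ i ∈ Finset.Icc 1 (T - 1), (1 / (i:ℝ))) ≤ 1 + Real.log T := by
    have h1 : (∑ i ∈ Finset.Icc 1 (T - 1), (1 / (i:ℝ))) = (harmonic (T - 1) : ℝ) := by
      rw [harmonic]
      push_cast
      have h2 : Finset.Icc 1 (T - 1) = Finset.Ico 1 T := by
        rw [← Finset.Ico_add_one_right_eq_Icc]
        congr 1
        omega
      rw [h2, Finset.sum_Ico_eq_sum_range]
      refine Finset.sum_congr rfl fun j _ => ?_
      push_cast
      rw [one_div, add_comm]
    rw [h1]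
    refine (harmonic_le_one_add_log (T - 1)).trans ?_
    have : Real.log ((T - 1 : ℕ) : ℝ) ≤ Real.log T := by
      rcases Nat.eq_zero_or_pos (T - 1) with h | h
      · simpa [h] using hlogT
      · exact Real.log_le_log (by exact_mod_cast h) (by exact_mod_cast Nat.sub_le T 1)
    linarith
  -- each x i ^2 ≤ E * sum of squares
  have hxsq : ∀ i, x i ^ 2 ≤ (E:ℝ) * ∑ s ∈ B i, (ε s) ^ 2 := by
    intro i
    calc x i ^ 2 ≤ ((B i).card : ℝ) * ∑ s ∈ B i, (ε s) ^ 2 := by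
          exact_mod_cast sq_sum_le_card_mul_sum_sq (s := B i) (f := ε)
      _ ≤ (E:ℝ) * ∑ s ∈ B i, (ε s) ^ 2 := by
          apply mul_le_mul_of_nonneg_right
          · exact_mod_cast hcard i
          · exact Finset.sum_nonneg fun s _ => by positivity
  have hsum2 : (∑ i ∈ Finset.Icc 1 (T - 1), (i:ℝ) * x i ^ 2)
      ≤ (E:ℝ) * ∑ i ∈ Finset.Icc 1 (T - 1), (i:ℝ) * ∑ s ∈ B i, (ε s) ^ 2 := by
    rw [Finset.mul_sum]
    refine Finset.sum_le_sum fun i hi => ?_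
    have hip : (0:ℝ) ≤ i := by positivity
    calc (i:ℝ) * x i ^ 2 ≤ (i:ℝ) * ((E:ℝ) * ∑ s ∈ B i, (ε s) ^ 2) :=
          mul_le_mul_of_nonneg_left (hxsq i) hip
      _ = (E:ℝ) * ((i:ℝ) * ∑ s ∈ B i, (ε s) ^ 2) := by ring
  have hRnn : 0 ≤ ∑ i ∈ Finset.Icc 1 (T - 1), (i:ℝ) * ∑ s ∈ B i, (ε s) ^ 2 :=
    Finset.sum_nonneg fun i _ => mul_nonneg (by positivity)
      (Finset.sum_nonneg fun s _ => by positivity)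
  have hxsqnn : 0 ≤ ∑ i ∈ Finset.Icc 1 (T - 1), (i:ℝ) * x i ^ 2 :=
    Finset.sum_nonneg fun i _ => mul_nonneg (by positivity) (by positivity)
  rw [one_div, inv_mul_le_iff₀ (by positivity)]
  calc (∑ i ∈ Finset.Icc 1 (T - 1), x i) ^ 2
      ≤ (∑ i ∈ Finset.Icc 1 (T - 1), (1 / (i:ℝ)))
        * (∑ i ∈ Finset.Icc 1 (T - 1), (i:ℝ) * x i ^ 2) := hCS
    _ ≤ (1 + Real.log T) * (∑ i ∈ Finset.Icc 1 (T - 1), (i:ℝ) * x i ^ 2) :=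
        mul_le_mul_of_nonneg_right hharm hxsqnn
    _ ≤ (1 + Real.log T) * ((E:ℝ) * ∑ i ∈ Finset.Icc 1 (T - 1), (i:ℝ) * ∑ s ∈ B i, (ε s) ^ 2) :=
        mul_le_mul_of_nonneg_left hsum2 hL.le
    _ = (E:ℝ) * (1 + Real.log T) * ∑ i ∈ Finset.Icc 1 (T - 1), (i:ℝ) * ∑ s ∈ B i, (ε s) ^ 2 := by
        ring
end
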